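/- Let γ > 0, κ > 0, α < 0 < β, τ ∈ (0, γ). Suppose φ̄, φ ∈ ℝ with |φ − φ̄| < τ, and γ < φ < γ − κα (i.e., the point lies in the inactive set J⁻ for φ). Define λ̄ = proj_{[-1,1]}(−φ̄/γ) and ū = proj_{[α,β]}(−(1/κ)(φ̄ + γλ̄)). Then |φ̄ + κū + γλ̄| ≤ τ and |φ̄| ≥ γ − τ. -/

import Mathlib

/-- Pointwise content of inclusion (41) for `J⁻`: if `γ < φ < γ - κα` and
`|φ - φ̄| < τ`, then `|φ̄ + κū + γλ̄| ≤ τ` and `|φ̄| ≥ γ - τ`. -/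
theorem stmt_13 (κ γ α β τ φb φ' lb ub : ℝ)
    (hκ : 0 < κ) (hγ : 0 < γ) (hα : α < 0) (hβ : 0 < β) (hτ0 : 0 < τ) (hτγ : τ < γ)
    (hclose : |φ' - φb| < τ) (h1 : γ < φ') (h2 : φ' < γ - κ * α)
    (hlb : lb = max (-1) (min 1 (-φb / γ)))
    (hub : ub = max α (min β (-(1/κ) * (φb + γ * lb))))
    : |φb + κ * ub + γ * lb| ≤ τ ∧ γ - τ ≤ |φb| := by
  obtain ⟨hc1, hc2⟩ := abs_lt.mp hclose
  have hφb : γ - τ < φb := by linarith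
  have hφb2 : φb < γ - κ * α + τ := by linarith
  have hφbpos : 0 < φb := by linarith
  refine ⟨?_, by rw [abs_of_pos hφbpos]; linarith⟩
  rcases le_or_gt γ φb with h | h
  · have hlb' : lb = -1 := by
      rw [hlb, min_eq_right, max_eq_left]
      · rw [div_le_iff₀ hγ]; linarith
      · rw [div_le_iff₀ hγ]; linarith
    subst hlb'
    have ht : -(1/κ) * (φb + γ * (-1)) ≤ 0 := by
      have : 0 < 1/κ := by positivity
      nlinarith
    rcases le_or_gt α (-(1/κ) * (φb + γ * (-1))) with h' | h'
    · have hub' : ub = -(1/κ) * (φb + γ * (-1)) := by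
        rw [hub, min_eq_right (by linarith), max_eq_right h']
      rw [hub']
      have hκ' : κ ≠ 0 := ne_of_gt hκ
      have : φb + κ * (-(1/κ) * (φb + γ * (-1))) + γ * (-1) = 0 := by
        field_simp; ring
      rw [this, abs_zero]; linarith
    · have hub' : ub = α := by
        rw [hub, min_eq_right (by linarith), max_eq_left (le_of_lt h')]
      rw [hub']
      have hpos : 0 < φb + κ * α + γ * (-1) := by
        have hk1 : κ * (1/κ) = 1 := by field_simp
        nlinarith [mul_lt_mul_of_pos_left h' hκ]
      rw [abs_of_pos hpos]; linarith
  · have hlb' : lb = -φb / γ := by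
      rw [hlb, min_eq_right, max_eq_right]
      · rw [le_div_iff₀ hγ]; nlinarith
      · rw [div_le_iff₀ hγ]; linarith
    subst hlb'
    have hz : φb + γ * (-φb / γ) = 0 := by field_simp; ring
    have hub' : ub = 0 := by
      rw [hub, hz, mul_zero, min_eq_right (le_of_lt hβ), max_eq_right (le_of_lt hα)]
    rw [hub', mul_zero, add_zero, hz, abs_zero]; linarith
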